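/- Let f₁,…,f_n be continuous real-valued functions on a connected open set I ⊆ ℝ^d, none identically zero. If for every choice of n points x₁,…,x_n ∈ I the n vectors ψ(x_j) = (f₁(x_j),…,f_n(x_j)) ∈ ℝ^n are linearly dependent, then the functions f₁,…,f_n are linearly dependent: there exist constants α₁,…,α_n, not all zero, such that α₁ f₁ + … + α_n f_n vanishes on a nonempty open subset of I. -/

import Mathlib

/-- If f₁,…,f_n are continuous, none identically zero on a connected open
set I ⊆ ℝ^d, and for every choice of n points x₁,…,x_n ∈ I the vectors
ψ(x_j) = (f₁(x_j),…,f_n(x_j)) ∈ ℝ^n are linearly dependent, then the functions are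
linearly dependent on a nonempty open subset of I. -/
theorem stmt_5 {d n : ℕ} (I : Set (Fin d → ℝ)) (hI : IsOpen I) (hconn : IsConnected I)
    (f : Fin n → (Fin d → ℝ) → ℝ) (hc : ∀ i, ContinuousOn (f i) I)
    (hnz : ∀ i, ∃ x ∈ I, f i x ≠ 0)
    (hdep : ∀ x : Fin n → (Fin d → ℝ), (∀ j, x j ∈ I) →
      ¬ LinearIndependent ℝ (fun j : Fin n => (fun i : Fin n => f i (x j)))) :
    ∃ α : Fin n → ℝ, α ≠ 0 ∧
      ∃ U : Set (Fin d → ℝ), U ⊆ I ∧ IsOpen U ∧ U.Nonempty ∧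
        ∀ x ∈ U, ∑ i, α i * f i x = 0 := by
  classical
  -- n = 0 is contradictory
  rcases Nat.eq_zero_or_pos n with hn0 | hn0
  · subst hn0
    exact absurd linearIndependent_empty_type (hdep (fun j => j.elim0) (fun j => j.elim0))
  set ψ : (Fin d → ℝ) → (Fin n → ℝ) := fun x i => f i x with hψ
  set S : Set (Fin n → ℝ) := ψ '' I with hS
  have hVne : Submodule.span ℝ S ≠ ⊤ := by
    intro htop
    obtain ⟨b, hbS, hbspan, hbli⟩ := exists_linearIndependent ℝ S
    rw [← hbspan] at htop
    have hbfin : b.Finite := hbli.finite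
    have : Fintype b := hbfin.fintype
    have hbasis : Module.Basis b ℝ (Fin n → ℝ) := Module.Basis.mk hbli (by rw [Subtype.range_val]; exact htop.ge)
    have hcard : Fintype.card b = n := by
      have := Module.finrank_eq_card_basis hbasis
      simpa [Module.finrank_fin_fun] using this.symm
    obtain ⟨e⟩ : Nonempty (Fin n ≃ b) :=
      ⟨(Fintype.equivFinOfCardEq hcard).symm⟩
    have hchoice : ∀ j : Fin n, ∃ x ∈ I, ψ x = (e j : Fin n → ℝ) := by
      intro j
      obtain ⟨x, hx, hx'⟩ := hbS (e j).2
      exact ⟨x, hx, hx'⟩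
    choose x hxI hxψ using hchoice
    apply hdep x hxI
    have : (fun j : Fin n => (fun i : Fin n => f i (x j))) =
        (fun v : b => (v : Fin n → ℝ)) ∘ e := by
      funext j; exact hxψ j
    rw [this]
    exact hbli.comp e e.injective
  obtain ⟨φ, hφ, hker⟩ := Submodule.exists_dual_map_eq_bot_of_lt_top
    (lt_top_iff_ne_top.mpr hVne) inferInstance
  refine ⟨fun i => φ ((fun j => if i = j then (1:ℝ) else 0)), ?_, I, le_refl I, hI, hconn.nonempty, ?_⟩
  · intro h0
    apply hφ
    apply LinearMap.ext
    intro v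
    rw [LinearMap.pi_apply_eq_sum_univ φ v]
    have : ∀ i, φ ((fun j => if i = j then (1:ℝ) else 0)) = 0 := fun i => congrFun h0 i
    simp only [this, mul_zero]; simp
  · intro y hy
    have hmem : ψ y ∈ Submodule.span ℝ S := Submodule.subset_span ⟨y, hy, rfl⟩
    have : φ (ψ y) = 0 := by
      have : φ (ψ y) ∈ (Submodule.span ℝ S).map φ := ⟨ψ y, hmem, rfl⟩
      rwa [hker, Submodule.mem_bot] at this
    rw [LinearMap.pi_apply_eq_sum_univ φ (ψ y)] at this
    simpa [hψ, mul_comm, smul_eq_mul] using this
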